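/- arXiv:1012.0580 — 5 statements merged into one kernel-verified Lean document; each statement's English description precedes it below -/
import Mathlib

section
/- Let g ≥ 2 be an integer, B the g×g matrix with all entries 1, and A a g×g involutive permutation matrix (A² = I) with zero diagonal. Then for every integer m ≥ 1: if m is odd, (B−A)^m = ((θ^{−m}+1)/g)·B − A, and if m is even, (B−A)^m = ((θ^{−m}−1)/g)·B + I, where θ = 1/(g−1). -/
open Matrix

/-- powers of B - A where B is the all-ones matrix and A an
involutive permutation matrix with zero diagonal. -/
theorem powers_of_B_sub_A (g : ℕ) (hg : 2 ≤ g)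
    (B A : Matrix (Fin g) (Fin g) ℝ)
    (hB : B = Matrix.of fun _ _ => (1 : ℝ))
    (σ : Equiv.Perm (Fin g)) (hA : A = σ.permMatrix ℝ)
    (hinv : A * A = 1) (hdiag : ∀ i, A i i = 0)
    (θ : ℝ) (hθ : θ = 1 / ((g : ℝ) - 1)) :
    ∀ m : ℕ, 1 ≤ m →
      (Odd m → (B - A) ^ m = (((θ ^ m)⁻¹ + 1) / g) • B - A) ∧
      (Even m → (B - A) ^ m = (((θ ^ m)⁻¹ - 1) / g) • B + 1) := by
  have hg2 : (2 : ℝ) ≤ (g : ℝ) := by exact_mod_cast hg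
  have hg0 : (g : ℝ) ≠ 0 := by linarith
  have hg1 : (g : ℝ) - 1 ≠ 0 := by linarith
  have hθm : ∀ m : ℕ, (θ ^ m)⁻¹ = ((g : ℝ) - 1) ^ m := by
    intro m; rw [hθ]; simp [one_div, inv_pow]
  have hBA : B * A = B := by
    subst hB hA; ext i j
    simp [mul_apply, Equiv.Perm.permMatrix, PEquiv.toMatrix_apply, Equiv.toPEquiv_apply,
      Equiv.apply_eq_iff_eq_symm_apply]
  have hAB : A * B = B := by
    subst hB hA; ext i j
    simp [mul_apply, Equiv.Perm.permMatrix, PEquiv.toMatrix_apply, Equiv.toPEquiv_apply]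
  have hBB : B * B = (g : ℝ) • B := by
    subst hB; ext i j; simp [mul_apply]
  intro m hm
  induction m with
  | zero => omega
  | succ n ih =>
    rcases Nat.eq_zero_or_pos n with hn | hn
    · subst hn
      constructor
      · intro _
        rw [pow_one, hθm]
        have : (((g : ℝ) - 1) ^ 1 + 1) / g = 1 := by field_simp; ring
        rw [this, one_smul]
      · intro h
        exact absurd h (by simp)
    · obtain ⟨hodd, heven⟩ := ih hn
      rcases Nat.even_or_odd n with he | ho
      · -- n even, n+1 odd
        have key : (B - A) ^ (n + 1) = (((θ ^ (n+1))⁻¹ + 1) / g) • B - A := by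
          rw [pow_succ, heven he, hθm, hθm]
          rw [add_mul, one_mul, smul_mul_assoc, mul_sub, hBB, hBA, pow_succ]
          match_scalars <;> field_simp <;> ring
        exact ⟨fun _ => key, fun h => absurd (Nat.even_add_one.mp h) (by simpa using he)⟩
      · -- n odd, n+1 even
        have key : (B - A) ^ (n + 1) = (((θ ^ (n+1))⁻¹ - 1) / g) • B + 1 := by
          rw [pow_succ, hodd ho, hθm, hθm]
          rw [sub_mul, smul_mul_assoc, mul_sub, mul_sub, hBB, hBA, hAB, hinv, pow_succ]
          match_scalars <;> field_simp <;> ring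
        exact ⟨fun h => absurd (Nat.odd_add_one.mp h) (by simpa using ho), fun _ => key⟩
end

section
/- Let g ≥ 3 and let P = (B−A)/(g−1) where B is the all-ones g×g matrix and A is an involutive permutation matrix with zero diagonal. Then every entry p_m(a,b) of the m-th power P^m satisfies |p_m(a,b) − 1/g| ≤ (1/(g−1))^m. -/
open Matrix

/-- entries of powers of the doubly stochastic matrix
P = (B - A)/(g-1) converge to 1/g at exponential rate 1/(g-1). -/
theorem entries_of_P_pow_close_to_uniform (g : ℕ) (hg : 3 ≤ g)
    (B A P : Matrix (Fin g) (Fin g) ℝ)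
    (hB : B = Matrix.of fun _ _ => (1 : ℝ))
    (σ : Equiv.Perm (Fin g)) (hA : A = σ.permMatrix ℝ)
    (hinv : A * A = 1) (hdiag : ∀ i, A i i = 0)
    (hP : P = ((g : ℝ) - 1)⁻¹ • (B - A)) :
    ∀ m : ℕ, ∀ a b : Fin g,
      |(P ^ m) a b - 1 / g| ≤ (1 / ((g : ℝ) - 1)) ^ m := by
  have hg3 : (3:ℝ) ≤ (g:ℝ) := by exact_mod_cast hg
  have hgpos : (0:ℝ) < g := by linarith
  have hg0 : (g:ℝ) ≠ 0 := ne_of_gt hgpos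
  have hgm1 : (0:ℝ) < (g:ℝ) - 1 := by linarith
  have hgm1' : ((g:ℝ) - 1) ≠ 0 := ne_of_gt hgm1
  have hBB : B * B = (g:ℝ) • B := by
    subst hB; ext i j; simp [Matrix.mul_apply]
  have hBA : B * A = B := by
    subst hB hA; ext i j
    simp [Matrix.mul_apply, Equiv.Perm.permMatrix, PEquiv.toMatrix_apply,
      Equiv.toPEquiv_apply, ← Equiv.eq_symm_apply, Finset.filter_eq']
  have hAB : A * B = B := by
    subst hB hA; ext i j
    simp [Matrix.mul_apply, Equiv.Perm.permMatrix, PEquiv.toMatrix_apply,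
      Equiv.toPEquiv_apply, eq_comm, Finset.filter_eq]
  have key : ∀ m : ℕ, P ^ (m + 1)
      = (1/(g:ℝ) + ((g:ℝ)⁻¹ * ((g:ℝ) - 1)⁻¹) * (-((g:ℝ) - 1)⁻¹) ^ m) • B
        + (-((g:ℝ) - 1)⁻¹) ^ (m+1) • (if Even (m+1) then (1 : Matrix (Fin g) (Fin g) ℝ) else A) := by
    intro m
    induction m with
    | zero =>
      rw [if_neg (by decide), pow_one, hP, smul_sub]
      match_scalars <;> (field_simp; try ring) <;>
        (have h' : (-1 + (g:ℝ)) ≠ 0 := by linarith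
         field_simp; ring)
    | succ n ih =>
      have hpow : P ^ (n + 1 + 1) = P ^ (n + 1) * P := pow_succ P (n+1)
      rw [hpow, ih, hP]
      rcases Nat.even_or_odd (n+1) with he | ho
      · rw [if_pos he, if_neg (by rw [Nat.even_add_one]; exact not_not_intro he)]
        simp only [Matrix.add_mul, Matrix.smul_mul, Matrix.mul_smul, Matrix.mul_sub,
          hBB, hBA, hAB, hinv, Matrix.one_mul, Matrix.mul_one, smul_sub, smul_smul, smul_add]
        match_scalars <;>
          (simp only [pow_succ]; generalize (-((g:ℝ) - 1)⁻¹) ^ n = t; field_simp; try ring)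
      · rw [if_neg (Nat.not_even_iff_odd.mpr ho),
          if_pos (by rw [Nat.even_add_one]; exact Nat.not_even_iff_odd.mpr ho)]
        simp only [Matrix.add_mul, Matrix.smul_mul, Matrix.mul_smul, Matrix.mul_sub,
          hBB, hBA, hAB, hinv, Matrix.one_mul, Matrix.mul_one, smul_sub, smul_smul, smul_add]
        match_scalars <;>
          (simp only [pow_succ]; generalize (-((g:ℝ) - 1)⁻¹) ^ n = t; field_simp; try ring)
  intro m a b
  match m with
  | 0 =>
    simp only [pow_zero, Matrix.one_apply]
    have h1 : (1:ℝ)/g ≤ 1 := by rw [div_le_one hgpos]; linarith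
    have h2 : (0:ℝ) < 1/g := by positivity
    have h1' : (g:ℝ)⁻¹ ≤ 1 := by rw [← one_div]; exact h1
    have h2' : (0:ℝ) < (g:ℝ)⁻¹ := by positivity
    split <;> (rw [abs_le]; constructor <;> simp <;> linarith)
  | (n+1) =>
    rw [key n]
    set D : Matrix (Fin g) (Fin g) ℝ := if Even (n+1) then 1 else A with hD
    have hd : D a b = 0 ∨ D a b = 1 := by
      rw [hD]
      split
      · rw [Matrix.one_apply]; split
        · right; rfl
        · left; rfl
      · subst hA
        simp only [Equiv.Perm.permMatrix, PEquiv.toMatrix_apply, Equiv.toPEquiv_apply]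
        by_cases hb : b ∈ some (σ a) <;> simp [hb]
    have hBab : B a b = 1 := by rw [hB]; rfl
    simp only [Matrix.add_apply, Matrix.smul_apply, smul_eq_mul, hBab]
    have hrw : (1/(g:ℝ) + ((g:ℝ)⁻¹ * ((g:ℝ) - 1)⁻¹) * (-((g:ℝ) - 1)⁻¹) ^ n) * 1
        + (-((g:ℝ) - 1)⁻¹) ^ (n+1) * D a b - 1/g
        = (-((g:ℝ) - 1)⁻¹) ^ n * ((g:ℝ)⁻¹ * ((g:ℝ) - 1)⁻¹ + (-((g:ℝ) - 1)⁻¹) * D a b) := by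
      rw [pow_succ]; ring
    rw [hrw, abs_mul, abs_pow, abs_neg, abs_inv, abs_of_pos hgm1]
    have hRHS : (1 / ((g:ℝ) - 1)) ^ (n+1) = (((g:ℝ) - 1)⁻¹) ^ n * ((g:ℝ) - 1)⁻¹ := by
      rw [one_div, pow_succ]
    rw [hRHS]
    have hnn : (0:ℝ) ≤ (((g:ℝ) - 1)⁻¹) ^ n := by positivity
    apply mul_le_mul_of_nonneg_left _ hnn
    have hginv : (g:ℝ)⁻¹ ≤ ((g:ℝ) - 1)⁻¹ := by
      rw [inv_le_inv₀ hgpos hgm1]; linarith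
    rcases hd with h | h <;> rw [h]
    · have hxpos : (0:ℝ) ≤ (g:ℝ)⁻¹ * ((g:ℝ) - 1)⁻¹ := by positivity
      rw [mul_zero, add_zero, abs_of_nonneg hxpos]
      have : (g:ℝ)⁻¹ ≤ 1 := by
        rw [inv_le_one_iff₀]; right; linarith
      nlinarith [inv_pos.mpr hgm1]
    · have hval : (g:ℝ)⁻¹ * ((g:ℝ) - 1)⁻¹ + (-((g:ℝ) - 1)⁻¹) * 1 = -(g:ℝ)⁻¹ := by
        field_simp; ring
      rw [hval, abs_neg, abs_inv, abs_of_pos hgpos]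
      exact hginv
end

section
/- Let X be the stationary Markov chain on 𝒢 with transition probabilities p(a,b) = 1/(g−1)·1{b ≠ ā} and uniform initial distribution. If J, K ⊂ ℕ are finite sets with max(J) + m ≤ min(K) for some m ≥ 1, then the Radon–Nikodym derivative of the joint distribution ν_{J∪K} of (X_j)_{j∈J∪K} with respect to the product ν_J × ν_K satisfies 1 − gθ^m ≤ dν_{J∪K}/d(ν_J × ν_K) ≤ 1 + gθ^m on its support, where θ = 1/(g−1). -/
open MeasureTheory Finset
open scoped ENNReal Classical

set_option linter.unusedSectionVars false
set_option maxHeartbeats 1000000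

namespace MCES
variable {G : Type} [Fintype G]

noncomputable def W (p : G → G → ℝ) (n : ℕ) (v : Fin (n+1) → G) : ℝ :=
  ∏ i : Fin n, p (v i.castSucc) (v i.succ)

noncomputable def TT (p : G → G → ℝ) (n : ℕ) (S : Finset ℕ) (x : ℕ → G) (a : G) : ℝ :=
  ∑ v : Fin (n+1) → G,
    if (∀ i : Fin (n+1), (i:ℕ) ∈ S → v i = x i) ∧ v (Fin.last n) = a then W p n v else 0

noncomputable def RR (p : G → G → ℝ) (n : ℕ) (S : Finset ℕ) (x : ℕ → G) : ℝ :=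
  ∑ v : Fin (n+1) → G,
    if (∀ i : Fin (n+1), (i:ℕ) ∈ S → v i = x i) then W p n v else 0

noncomputable def Pm (p : G → G → ℝ) : ℕ → G → G → ℝ
  | 0 => fun a b => if b = a then 1 else 0
  | (r+1) => fun a b => ∑ c, Pm p r a c * p c b

lemma W_snoc (p : G → G → ℝ) (n : ℕ) (u : Fin (n+1) → G) (b : G) :
    W p (n+1) (Fin.snoc u b) = W p n u * p (u (Fin.last n)) b := by
  unfold W; rw [Fin.prod_univ_castSucc]; simp [Fin.succ_castSucc, Fin.succ_last, -Fin.castSucc_succ]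

lemma sum_snoc {n : ℕ} (f : (Fin (n+2) → G) → ℝ) :
    ∑ v : Fin (n+2) → G, f v = ∑ b : G, ∑ u : Fin (n+1) → G, f (Fin.snoc u b) := by
  rw [← Equiv.sum_comp (Fin.snocEquiv (fun _ => G)) f, Fintype.sum_prod_type]
  rfl

lemma forall_snoc {n : ℕ} (S : Finset ℕ) (x : ℕ → G) (u : Fin (n+1) → G) (b : G) :
    (∀ i : Fin (n+2), (i:ℕ) ∈ S → (Fin.snoc u b : Fin (n+2) → G) i = x i) ↔
      ((∀ i : Fin (n+1), (i:ℕ) ∈ S → u i = x i) ∧ ((n+1) ∈ S → b = x (n+1))) := by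
  rw [Fin.forall_fin_succ']
  simp [Fin.snoc_castSucc, Fin.snoc_last]


lemma RR_eq_sum_TT (p : G → G → ℝ) (n : ℕ) (S : Finset ℕ) (x : ℕ → G) :
    RR p n S x = ∑ a : G, TT p n S x a := by
  unfold RR TT
  rw [Finset.sum_comm]
  apply Finset.sum_congr rfl
  intro v _
  by_cases h : (∀ i : Fin (n+1), (i:ℕ) ∈ S → v i = x i)
  · simp only [eq_true h, true_and, if_true]
    rw [Fintype.sum_ite_eq (v (Fin.last n)) (fun _ => W p n v)]
  · simp only [eq_false h, false_and, if_false, Finset.sum_const_zero]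

lemma sum_TT_mul (p : G → G → ℝ) (n : ℕ) (S : Finset ℕ) (x : ℕ → G) (b : G) :
    ∑ a : G, TT p n S x a * p a b =
      ∑ u : Fin (n+1) → G,
        if (∀ i : Fin (n+1), (i:ℕ) ∈ S → u i = x i)
        then W p n u * p (u (Fin.last n)) b else 0 := by
  unfold TT
  simp_rw [Finset.sum_mul, ite_mul, zero_mul]
  rw [Finset.sum_comm]
  apply Finset.sum_congr rfl; intro u _
  by_cases h : (∀ i : Fin (n+1), (i:ℕ) ∈ S → u i = x i)
  · simp only [eq_true h, true_and, if_true]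
    rw [Fintype.sum_ite_eq (u (Fin.last n)) (fun a => W p n u * p a b)]
  · simp only [eq_false h, false_and, if_false, Finset.sum_const_zero]

lemma TT_succ (p : G → G → ℝ) (n : ℕ) (S : Finset ℕ) (x : ℕ → G) (b : G) :
    TT p (n+1) S x b =
      if (n+1) ∈ S ∧ b ≠ x (n+1) then 0
      else ∑ a : G, TT p n S x a * p a b := by
  have key : TT p (n+1) S x b =
      ∑ u : Fin (n+1) → G,
        if ((∀ i : Fin (n+1), (i:ℕ) ∈ S → u i = x i) ∧ ((n+1) ∈ S → b = x (n+1)))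
        then W p n u * p (u (Fin.last n)) b else 0 := by
    unfold TT
    rw [sum_snoc]
    have h2 : ∀ b' : G, ∀ u : Fin (n+1) → G,
        (if (∀ i : Fin (n+2), (i:ℕ) ∈ S → (Fin.snoc u b' : Fin (n+2) → G) i = x i) ∧
            (Fin.snoc u b' : Fin (n+2) → G) (Fin.last (n+1)) = b
         then W p (n+1) (Fin.snoc u b') else 0)
        = if b' = b then
            (if ((∀ i : Fin (n+1), (i:ℕ) ∈ S → u i = x i) ∧ ((n+1) ∈ S → b = x (n+1)))
             then W p n u * p (u (Fin.last n)) b else 0) else 0 := by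
      intro b' u
      simp only [forall_snoc, Fin.snoc_last, W_snoc]
      by_cases hb : b' = b
      · subst hb; simp [and_assoc]
      · simp [hb]
    simp_rw [h2]
    rw [Finset.sum_comm]
    simp_rw [Fintype.sum_ite_eq' b]
  rw [key]
  by_cases hc : (n+1) ∈ S ∧ b ≠ x (n+1)
  · rw [if_pos hc]
    apply Finset.sum_eq_zero; intro u _
    rw [if_neg]; rintro ⟨-, h2⟩; exact hc.2 (h2 hc.1)
  · rw [if_neg hc]
    have hbx : ((n+1) ∈ S → b = x (n+1)) = True := by
      apply eq_true; intro hS; by_contra hne; exact hc ⟨hS, hne⟩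
    simp only [hbx, and_true]
    rw [sum_TT_mul]

lemma TT_zero (p : G → G → ℝ) (S : Finset ℕ) (x : ℕ → G) (a : G) :
    TT p 0 S x a = if (0 ∈ S → a = x 0) then 1 else 0 := by
  unfold TT
  rw [Fintype.sum_equiv (Equiv.funUnique (Fin 1) G)
    _ (fun c => if ((0 ∈ S → c = x 0) ∧ c = a) then (1:ℝ) else 0)]
  · have h3 : ∀ c : G, (if ((0 ∈ S → c = x 0) ∧ c = a) then (1:ℝ) else 0)
        = if c = a then (if (0 ∈ S → a = x 0) then (1:ℝ) else 0) else 0 := by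
      intro c
      by_cases hca : c = a
      · subst hca; simp
      · simp [hca]
    simp_rw [h3]
    rw [Fintype.sum_ite_eq' a]
  · intro v
    have hw : W p 0 v = 1 := by simp [W]
    rw [hw]
    apply if_congr _ rfl rfl
    constructor
    · rintro ⟨h1, h2⟩
      exact ⟨fun hS => h1 0 hS, h2⟩
    · rintro ⟨h1, h2⟩
      refine ⟨fun i hi => ?_, h2⟩
      have hi0 : i = 0 := by omega
      subst hi0
      exact h1 hi


section Prob

variable (g : ℕ) (hg : 3 ≤ g) (hcard : Fintype.card G = g)
  (bar : G → G) (hinv : ∀ x, bar (bar x) = x)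
  (p : G → G → ℝ) (hp : ∀ a b, p a b = if b = bar a then 0 else 1 / ((g : ℝ) - 1))

include hg

lemma g1_pos : (0:ℝ) < (g:ℝ) - 1 := by
  have : (3:ℝ) ≤ g := by exact_mod_cast hg
  linarith

include hp

lemma p_nonneg : ∀ a b, 0 ≤ p a b := by
  intro a b
  rw [hp]
  have := g1_pos g hg
  split
  · exact le_rfl
  · positivity

include hinv in
lemma p_symm : ∀ a b, p a b = p b a := by
  intro a b
  rw [hp, hp]
  apply if_congr _ rfl rfl
  constructor
  · intro h; rw [h, hinv]
  · intro h; rw [h, hinv]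

include hcard in
lemma rowsum : ∀ a, ∑ b, p a b = 1 := by
  intro a
  have key : ∀ b, p a b = 1 / ((g : ℝ) - 1) - (if b = bar a then 1 / ((g : ℝ) - 1) else 0) := by
    intro b; rw [hp]; split <;> ring
  simp_rw [key]
  rw [Finset.sum_sub_distrib, Finset.sum_const, Fintype.sum_ite_eq' (bar a) (fun _ => 1 / ((g:ℝ)-1))]
  rw [Finset.card_univ, hcard]
  have hne : ((g:ℝ) - 1) ≠ 0 := ne_of_gt (g1_pos g hg)
  rw [nsmul_eq_mul]
  field_simp

include hcard hinv in
lemma colsum : ∀ b, ∑ a, p a b = 1 := by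
  intro b
  simp_rw [p_symm g hg bar hinv p hp]
  exact rowsum g hg hcard bar p hp b


include hinv in
lemma p_apply_eq (q b : G) :
    p q b - 1 / (g:ℝ) = (-(1 / ((g:ℝ) - 1))) * ((if b = bar q then 1 else 0) - 1 / (g:ℝ)) := by
  have h1 : ((g:ℝ) - 1) ≠ 0 := ne_of_gt (g1_pos g hg)
  have h0 : (g:ℝ) ≠ 0 := by
    have : (3:ℝ) ≤ g := by exact_mod_cast hg
    linarith
  rw [hp]
  split
  · field_simp
    try ring
  · field_simp
    try ring

omit hp hg

lemma W_nonneg (hpn : ∀ a b, 0 ≤ p a b) (n : ℕ) (v : Fin (n+1) → G) : 0 ≤ W p n v := by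
  unfold W
  exact Finset.prod_nonneg (fun i _ => hpn _ _)

lemma TT_nonneg (hpn : ∀ a b, 0 ≤ p a b) (n : ℕ) (S : Finset ℕ) (x : ℕ → G) (a : G) :
    0 ≤ TT p n S x a := by
  unfold TT
  apply Finset.sum_nonneg
  intro v _
  split
  · exact W_nonneg p hpn n v
  · exact le_rfl

lemma RR_nonneg (hpn : ∀ a b, 0 ≤ p a b) (n : ℕ) (S : Finset ℕ) (x : ℕ → G) :
    0 ≤ RR p n S x := by
  rw [RR_eq_sum_TT]
  exact Finset.sum_nonneg (fun a _ => TT_nonneg p hpn n S x a)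

include hg hcard hinv hp in
lemma TT_empty (n : ℕ) (x : ℕ → G) : ∀ a, TT p n (∅ : Finset ℕ) x a = 1 := by
  induction n with
  | zero => intro a; rw [TT_zero]; simp
  | succ n ih =>
      intro a
      rw [TT_succ]
      simp_rw [ih]
      simp only [Finset.notMem_empty, false_and, if_false, one_mul]
      exact colsum g hg hcard bar hinv p hp a

include hg hcard hinv hp in
lemma RR_empty (n : ℕ) (x : ℕ → G) : RR p n (∅ : Finset ℕ) x = (g : ℝ) := by
  rw [RR_eq_sum_TT]
  simp_rw [TT_empty g hg hcard bar hinv p hp n x]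
  rw [Finset.sum_const, Finset.card_univ, hcard, nsmul_eq_mul, mul_one]

include hg hcard hinv hp in
lemma Pm_formula (r : ℕ) (a b : G) :
    Pm p r a b = 1 / (g:ℝ) +
      (-(1 / ((g:ℝ) - 1)))^r * ((if b = bar^[r] a then 1 else 0) - 1 / (g:ℝ)) := by
  induction r generalizing b with
  | zero =>
      simp only [Pm, Function.iterate_zero, id_eq, pow_zero, one_mul]
      ring_nf
      congr
  | succ r ih =>
      have hPm : Pm p (r+1) a b = ∑ c, Pm p r a c * p c b := rfl
      rw [hPm]
      simp_rw [ih]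
      set E : ℝ := (-(1 / ((g:ℝ) - 1)))^r with hE
      set q : G := bar^[r] a with hq
      have expand : ∀ c, (1 / (g:ℝ) + E * ((if c = q then 1 else 0) - 1 / (g:ℝ))) * p c b
          = (1 / (g:ℝ)) * p c b + E * ((if c = q then p c b else 0) - (1 / (g:ℝ)) * p c b) := by
        intro c; split <;> ring
      simp_rw [expand]
      rw [Finset.sum_add_distrib]
      rw [← Finset.mul_sum, colsum g hg hcard bar hinv p hp b, mul_one]
      rw [← Finset.mul_sum]
      rw [Finset.sum_sub_distrib]
      rw [Fintype.sum_ite_eq' q (fun c => p c b)]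
      rw [← Finset.mul_sum, colsum g hg hcard bar hinv p hp b, mul_one]
      rw [Function.iterate_succ_apply', ← hq]
      rw [p_apply_eq g hg bar hinv p hp q b]
      rw [pow_succ]
      ring


include hg hcard hinv hp in
lemma gPm_bound (r mm : ℕ) (hmr : mm ≤ r) (a b : G) :
    |(g:ℝ) * Pm p r a b - 1| ≤ (g:ℝ) * (1 / ((g:ℝ) - 1))^mm := by
  have hgp := g1_pos g hg
  have hg3 : (3:ℝ) ≤ g := by exact_mod_cast hg
  have h0 : (0:ℝ) < g := by linarith
  rw [Pm_formula g hg hcard bar hinv p hp r a b]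
  set E : ℝ := (-(1 / ((g:ℝ) - 1)))^r with hE
  set d : ℝ := (if b = bar^[r] a then 1 else 0) with hd
  have heq : (g:ℝ) * (1 / g + E * (d - 1 / g)) - 1 = E * ((g:ℝ) * d - 1) := by
    have h1g : (g:ℝ) * (1 / g) = 1 := mul_one_div_cancel (ne_of_gt h0)
    linear_combination (1 - E) * h1g
  rw [heq, abs_mul]
  have habsE : |E| = (1 / ((g:ℝ) - 1))^r := by
    rw [hE, abs_pow, abs_neg, abs_of_pos (by positivity)]
  have hdb : |(g:ℝ) * d - 1| ≤ (g:ℝ) - 1 := by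
    rw [hd]
    split
    · rw [mul_one, abs_of_nonneg (by linarith)]
    · rw [mul_zero]
      rw [show (0:ℝ) - 1 = -1 by ring, abs_neg, abs_one]
      linarith
  have hple : ((1:ℝ) / ((g:ℝ) - 1))^r ≤ (1 / ((g:ℝ) - 1))^mm := by
    apply pow_le_pow_of_le_one (by positivity) _ hmr
    rw [div_le_one hgp]
    linarith
  calc |E| * |(g:ℝ) * d - 1| ≤ (1 / ((g:ℝ) - 1))^mm * ((g:ℝ) - 1) := by
        rw [habsE]
        exact mul_le_mul hple hdb (abs_nonneg _) (by positivity)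
    _ ≤ (g:ℝ) * (1 / ((g:ℝ) - 1))^mm := by
        rw [mul_comm]
        apply mul_le_mul_of_nonneg_right (by linarith) (by positivity)

include hg hcard bar hp in
lemma Pm_rowsum (r : ℕ) (a : G) : ∑ b, Pm p r a b = 1 := by
  induction r with
  | zero =>
      show (∑ b, if b = a then (1:ℝ) else 0) = 1
      rw [Fintype.sum_ite_eq' a (fun _ => (1:ℝ))]
  | succ r ih =>
      show (∑ b, ∑ c, Pm p r a c * p c b) = 1
      rw [Finset.sum_comm]
      simp_rw [← Finset.mul_sum, rowsum g hg hcard bar p hp]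
      simp_rw [mul_one]
      exact ih

omit hg hcard hinv hp

lemma TT_congr (n : ℕ) (S S' : Finset ℕ) (x : ℕ → G) (a : G)
    (h : ∀ i ≤ n, (i ∈ S ↔ i ∈ S')) : TT p n S x a = TT p n S' x a := by
  unfold TT
  apply Finset.sum_congr rfl
  intro v _
  apply if_congr _ rfl rfl
  apply and_congr_left'
  constructor
  · intro hv i hi
    exact hv i ((h i (by omega)).mpr hi)
  · intro hv i hi
    exact hv i ((h i (by omega)).mp hi)

lemma TT_top_constraint (t : ℕ) (S : Finset ℕ) (ht : t ∈ S) (x : ℕ → G) (a : G) :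
    TT p t S x a = if a = x t then TT p t (S.erase t) x a else 0 := by
  by_cases ha : a = x t
  · rw [if_pos ha]
    unfold TT
    apply Finset.sum_congr rfl
    intro v _
    apply if_congr _ rfl rfl
    apply and_congr_left
    intro h2
    constructor
    · intro hv i hi
      exact hv i (Finset.mem_of_mem_erase hi)
    · intro hv i hi
      rcases eq_or_ne (i:ℕ) t with hit | hit
      · have hil : i = Fin.last t := by
          apply Fin.ext
          simp [hit]
        rw [hil, h2]
        exact ha
      · exact hv i (Finset.mem_erase.mpr ⟨hit, hi⟩)
  · rw [if_neg ha]
    unfold TT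
    apply Finset.sum_eq_zero
    intro v _
    rw [if_neg]
    rintro ⟨h1, h2⟩
    apply ha
    rw [← h2]
    exact h1 (Fin.last t) ht

include hg hcard hinv hp in
lemma TT_prop (t : ℕ) (S : Finset ℕ) (hbound : ∀ i ∈ S, i ≤ t) (x : ℕ → G) :
    ∀ r b, TT p (t + r) S x b = ∑ a, TT p t S x a * Pm p r a b := by
  intro r
  induction r with
  | zero =>
      intro b
      show TT p (t + 0) S x b = ∑ a, TT p t S x a * (if b = a then (1:ℝ) else 0)
      have : ∀ a, TT p t S x a * (if b = a then (1:ℝ) else 0)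
          = if b = a then TT p t S x a else 0 := by
        intro a; split <;> ring
      simp_rw [this, Fintype.sum_ite_eq b (fun a => TT p t S x a)]
      rfl
  | succ r ih =>
      intro b
      have hnotin : ¬(t + r + 1) ∈ S := fun h => by have := hbound _ h; omega
      have : t + (r + 1) = (t + r) + 1 := by omega
      rw [this, TT_succ]
      rw [if_neg (by rintro ⟨h1, -⟩; exact hnotin h1)]
      simp_rw [ih, Finset.sum_mul]
      rw [Finset.sum_comm]
      simp_rw [mul_assoc, ← Finset.mul_sum]
      rfl


lemma W_restrict (n : ℕ) (y : ℕ → G) :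
    W p n (fun i : Fin (n+1) => y i) = ∏ i ∈ Finset.range n, p (y i) (y (i+1)) := by
  rw [← Fin.prod_univ_eq_prod_range (fun j => p (y j) (y (j+1))) n]
  rfl

include hg hcard hinv hp in
lemma measure_cyl [MeasurableSpace G] (ν : Measure (ℕ → G)) [IsProbabilityMeasure ν]
    (hcyl : ∀ n : ℕ, 1 ≤ n → ∀ x : ℕ → G,
      ν {y : ℕ → G | ∀ i < n, y i = x i} =
        ENNReal.ofReal ((1 / (g : ℝ)) * ∏ i ∈ Finset.range (n - 1), p (x i) (x (i + 1))))
    (S : Finset ℕ) (x : ℕ → G) (n : ℕ) (hSn : ∀ i ∈ S, i ≤ n) :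
    ν {y : ℕ → G | ∀ i ∈ S, y i = x i} = ENNReal.ofReal ((1 / (g:ℝ)) * RR p n S x) := by
  classical
  have hpn := p_nonneg g hg bar p hp
  have hg0 : (0:ℝ) < g := by
    have : (3:ℝ) ≤ g := by exact_mod_cast hg
    linarith
  set ext : (Fin (n+1) → G) → (ℕ → G) :=
    fun v i => if h : i < n + 1 then v ⟨i, h⟩ else x i with hext
  have hextlt : ∀ (v : Fin (n+1) → G) (i : ℕ) (h : i < n+1), ext v i = v ⟨i, h⟩ := by
    intro v i h; simp only [hext, dif_pos h]
  set A : (Fin (n+1) → G) → Set (ℕ → G) :=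
    fun v => {y : ℕ → G | ∀ i < n + 1, y i = ext v i} with hA
  have hAval : ∀ v, ν (A v) = ENNReal.ofReal ((1 / (g:ℝ)) * W p n v) := by
    intro v
    rw [hA]
    rw [hcyl (n+1) (by omega) (ext v)]
    have h1 : (fun i : Fin (n+1) => ext v i) = v := funext fun i => hextlt v i i.isLt
    have h2 : ∏ i ∈ Finset.range n, p (ext v i) (ext v (i+1)) = W p n v := by
      rw [← W_restrict p n (ext v), h1]
    rw [show (n + 1 - 1) = n from rfl, h2]
  have hmemA : ∀ (y : ℕ → G), y ∈ A (fun i : Fin (n+1) => y i) := by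
    intro y
    show ∀ i < n + 1, y i = ext (fun i : Fin (n+1) => y i) i
    intro i hilt
    exact (hextlt (fun i : Fin (n+1) => y i) i hilt).symm
  set C : Finset (Fin (n+1) → G) :=
    Finset.univ.filter (fun v => ∀ i : Fin (n+1), (i:ℕ) ∈ S → v i = x i) with hC
  have hRR : RR p n S x = ∑ v ∈ C, W p n v := by
    rw [hC, Finset.sum_filter]; rfl
  have hWn : ∀ v : Fin (n+1) → G, 0 ≤ (1 / (g:ℝ)) * W p n v := by
    intro v
    have := W_nonneg p hpn n v
    positivity
  have hsub1 : {y : ℕ → G | ∀ i ∈ S, y i = x i} ⊆ ⋃ v ∈ C, A v := by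
    intro y hy
    have hvC : (fun i : Fin (n+1) => y i) ∈ C := by
      rw [hC, Finset.mem_filter]
      exact ⟨Finset.mem_univ _, fun i hi => hy i hi⟩
    exact Set.mem_iUnion₂.mpr ⟨_, hvC, hmemA y⟩
  have hsub2 : Set.univ ⊆ {y : ℕ → G | ∀ i ∈ S, y i = x i} ∪ ⋃ v ∈ Cᶜ, A v := by
    intro y _
    by_cases hyC : (fun i : Fin (n+1) => y i) ∈ C
    · left
      intro i hi
      have hilt : i < n + 1 := by have := hSn i hi; omega
      rw [hC, Finset.mem_filter] at hyC
      exact hyC.2 ⟨i, hilt⟩ hi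
    · right
      exact Set.mem_iUnion₂.mpr ⟨_, Finset.mem_compl.mpr hyC, hmemA y⟩
  have hub1 : ν {y : ℕ → G | ∀ i ∈ S, y i = x i} ≤
      ENNReal.ofReal (∑ v ∈ C, (1 / (g:ℝ)) * W p n v) := by
    calc ν {y : ℕ → G | ∀ i ∈ S, y i = x i} ≤ ν (⋃ v ∈ C, A v) := measure_mono hsub1
      _ ≤ ∑ v ∈ C, ν (A v) := measure_biUnion_finset_le C A
      _ = ∑ v ∈ C, ENNReal.ofReal ((1 / (g:ℝ)) * W p n v) := by
          exact Finset.sum_congr rfl (fun v _ => hAval v)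
      _ = ENNReal.ofReal (∑ v ∈ C, (1 / (g:ℝ)) * W p n v) := by
          rw [ENNReal.ofReal_sum_of_nonneg (fun v _ => hWn v)]
  have hub2 : ν (⋃ v ∈ Cᶜ, A v) ≤ ENNReal.ofReal (∑ v ∈ Cᶜ, (1 / (g:ℝ)) * W p n v) := by
    calc ν (⋃ v ∈ Cᶜ, A v) ≤ ∑ v ∈ Cᶜ, ν (A v) := measure_biUnion_finset_le Cᶜ A
      _ = ENNReal.ofReal (∑ v ∈ Cᶜ, (1 / (g:ℝ)) * W p n v) := by
          rw [ENNReal.ofReal_sum_of_nonneg (fun v _ => hWn v)]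
          exact Finset.sum_congr rfl (fun v _ => hAval v)
  have hsumW : ∑ v : Fin (n+1) → G, W p n v = (g:ℝ) := by
    have h1 := RR_empty g hg hcard bar hinv p hp n x
    rw [RR] at h1
    simpa using h1
  have htot : (∑ v ∈ C, (1 / (g:ℝ)) * W p n v) + (∑ v ∈ Cᶜ, (1 / (g:ℝ)) * W p n v) = 1 := by
    rw [hC]
    rw [Finset.compl_filter]
    rw [Finset.sum_filter_add_sum_filter_not]
    rw [← Finset.mul_sum, hsumW]
    field_simp
  have hone : ENNReal.ofReal (∑ v ∈ C, (1 / (g:ℝ)) * W p n v) +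
      ENNReal.ofReal (∑ v ∈ Cᶜ, (1 / (g:ℝ)) * W p n v) = 1 := by
    rw [← ENNReal.ofReal_add (Finset.sum_nonneg (fun v _ => hWn v))
      (Finset.sum_nonneg (fun v _ => hWn v)), htot, ENNReal.ofReal_one]
  have hlb : ENNReal.ofReal (∑ v ∈ C, (1 / (g:ℝ)) * W p n v) ≤
      ν {y : ℕ → G | ∀ i ∈ S, y i = x i} := by
    have h1 : (1:ℝ≥0∞) ≤ ν {y : ℕ → G | ∀ i ∈ S, y i = x i} + ν (⋃ v ∈ Cᶜ, A v) := by
      calc (1:ℝ≥0∞) = ν Set.univ := (measure_univ (μ := ν)).symm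
        _ ≤ ν ({y : ℕ → G | ∀ i ∈ S, y i = x i} ∪ ⋃ v ∈ Cᶜ, A v) := measure_mono hsub2
        _ ≤ _ := measure_union_le _ _
    have h2 : ENNReal.ofReal (∑ v ∈ C, (1 / (g:ℝ)) * W p n v) +
        ENNReal.ofReal (∑ v ∈ Cᶜ, (1 / (g:ℝ)) * W p n v) ≤
        ν {y : ℕ → G | ∀ i ∈ S, y i = x i} +
        ENNReal.ofReal (∑ v ∈ Cᶜ, (1 / (g:ℝ)) * W p n v) := by
      rw [hone]
      exact h1.trans (add_le_add_right hub2 _)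
    exact (ENNReal.add_le_add_iff_right ENNReal.ofReal_ne_top).mp h2
  have := le_antisymm hub1 hlb
  rw [this, hRR, Finset.mul_sum]
end Prob

end MCES


/-- exponential mixing of the Markov chain of random strings.
If `J`, `K` are finite index sets with `max J + m ≤ min K`, then the density of
the joint law of `(X_j)_{j ∈ J ∪ K}` with respect to the product of the laws of
`(X_j)_{j ∈ J}` and `(X_j)_{j ∈ K}` lies between `1 - gθ^m` and `1 + gθ^m`,
stated here as bounds on cylinder probabilities. -/
theorem markov_chain_exponential_separation (G : Type) [Fintype G] [MeasurableSpace G]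
    (g : ℕ) (hg : 3 ≤ g) (hcard : Fintype.card G = g)
    (bar : G → G) (hinv : ∀ x, bar (bar x) = x) (hnf : ∀ x, bar x ≠ x)
    (p : G → G → ℝ)
    (hp : ∀ a b, p a b = if b = bar a then 0 else 1 / ((g : ℝ) - 1))
    (θ : ℝ) (hθ : θ = 1 / ((g : ℝ) - 1))
    (ν : Measure (ℕ → G)) [IsProbabilityMeasure ν]
    (hcyl : ∀ n : ℕ, 1 ≤ n → ∀ x : ℕ → G,
      ν {y : ℕ → G | ∀ i < n, y i = x i} =
        ENNReal.ofReal ((1 / (g : ℝ)) * ∏ i ∈ range (n - 1), p (x i) (x (i + 1))))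
    (J K : Finset ℕ) (hJ : J.Nonempty) (hK : K.Nonempty)
    (m : ℕ) (hm : 1 ≤ m) (hsep : J.max' hJ + m ≤ K.min' hK)
    (x : ℕ → G)
    (hsupp : ν {y : ℕ → G | ∀ i ∈ J, y i = x i} ≠ 0 ∧
             ν {y : ℕ → G | ∀ i ∈ K, y i = x i} ≠ 0) :
    (1 - (g : ℝ) * θ ^ m) *
        ((ν {y : ℕ → G | ∀ i ∈ J, y i = x i}).toReal *
          (ν {y : ℕ → G | ∀ i ∈ K, y i = x i}).toReal)
      ≤ (ν {y : ℕ → G | ∀ i ∈ J ∪ K, y i = x i}).toReal ∧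
    (ν {y : ℕ → G | ∀ i ∈ J ∪ K, y i = x i}).toReal
      ≤ (1 + (g : ℝ) * θ ^ m) *
        ((ν {y : ℕ → G | ∀ i ∈ J, y i = x i}).toReal *
          (ν {y : ℕ → G | ∀ i ∈ K, y i = x i}).toReal) := by
  classical
  set j := J.max' hJ with hj
  set k := K.min' hK with hk
  set M := K.max' hK with hM
  have hpn := MCES.p_nonneg g hg bar p hp
  have hg0 : (0:ℝ) < g := by
    have : (3:ℝ) ≤ g := by exact_mod_cast hg
    linarith
  have hjk : j + m ≤ k := hsep
  have hkM : k ≤ M := K.min'_le _ (K.max'_mem hK)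
  have hJle : ∀ i ∈ J, i ≤ j := fun i hi => J.le_max' i hi
  have hKge : ∀ i ∈ K, k ≤ i := fun i hi => K.min'_le i hi
  have hKle : ∀ i ∈ K, i ≤ M := fun i hi => K.le_max' i hi
  have hjltk : j < k := by omega
  set r0 := k - j with hr0
  have hjr0 : j + r0 = k := by omega
  have hmr0 : m ≤ r0 := by omega
  -- measure values
  have hνJ : ν {y : ℕ → G | ∀ i ∈ J, y i = x i} =
      ENNReal.ofReal ((1 / (g:ℝ)) * MCES.RR p M J x) :=
    MCES.measure_cyl g hg hcard bar hinv p hp ν hcyl J x M (fun i hi => by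
      have := hJle i hi; omega)
  have hνK : ν {y : ℕ → G | ∀ i ∈ K, y i = x i} =
      ENNReal.ofReal ((1 / (g:ℝ)) * MCES.RR p M K x) :=
    MCES.measure_cyl g hg hcard bar hinv p hp ν hcyl K x M hKle
  have hνJK : ν {y : ℕ → G | ∀ i ∈ J ∪ K, y i = x i} =
      ENNReal.ofReal ((1 / (g:ℝ)) * MCES.RR p M (J ∪ K) x) :=
    MCES.measure_cyl g hg hcard bar hinv p hp ν hcyl (J ∪ K) x M (fun i hi => by
      rcases Finset.mem_union.mp hi with h | h
      · have := hJle i h; omega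
      · exact hKle i h)
  -- combinatorial identities
  set AJ := MCES.TT p j (J.erase j) x (x j) with hAJ
  have hTTj : ∀ a, MCES.TT p j J x a = if a = x j then AJ else 0 := by
    intro a
    rw [MCES.TT_top_constraint p j J (J.max'_mem hJ) x a]
    by_cases ha : a = x j
    · rw [if_pos ha, if_pos ha, ha]
    · rw [if_neg ha, if_neg ha]
  have hTTjr : ∀ r b, MCES.TT p (j + r) J x b = AJ * MCES.Pm p r (x j) b := by
    intro r b
    rw [MCES.TT_prop g hg hcard bar hinv p hp j J hJle x r b]
    simp_rw [hTTj, ite_mul, zero_mul]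
    rw [Fintype.sum_ite_eq' (x j) (fun a => AJ * MCES.Pm p r a b)]
  have hTTkJ : ∀ b, MCES.TT p k J x b = AJ * MCES.Pm p r0 (x j) b := by
    intro b
    rw [← hjr0]
    exact hTTjr r0 b
  have hknJ : k ∉ J := fun h => by have := hJle k h; omega
  have hTTkJK : ∀ b, MCES.TT p k (J ∪ K) x b =
      if b = x k then AJ * MCES.Pm p r0 (x j) (x k) else 0 := by
    intro b
    have hcongr : MCES.TT p k (J ∪ K) x b = MCES.TT p k (J ∪ {k}) x b := by
      apply MCES.TT_congr
      intro i hi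
      simp only [Finset.mem_union, Finset.mem_singleton]
      constructor
      · rintro (h | h)
        · exact Or.inl h
        · right; have := hKge i h; omega
      · rintro (h | h)
        · exact Or.inl h
        · right; rw [h]; exact K.min'_mem hK
    rw [hcongr]
    rw [MCES.TT_top_constraint p k (J ∪ {k})
      (Finset.mem_union_right _ (Finset.mem_singleton_self k)) x b]
    by_cases hb : b = x k
    · rw [if_pos hb, if_pos hb]
      have hcongr2 : MCES.TT p k ((J ∪ {k}).erase k) x b = MCES.TT p k J x b := by
        apply MCES.TT_congr
        intro i _
        simp only [Finset.mem_erase, Finset.mem_union, Finset.mem_singleton]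
        constructor
        · rintro ⟨hne, h | h⟩
          · exact h
          · exact absurd h hne
        · intro h
          exact ⟨fun he => hknJ (he ▸ h), Or.inl h⟩
      rw [hcongr2, hTTkJ, hb]
    · rw [if_neg hb, if_neg hb]
  have hTTkK : ∀ b, MCES.TT p k K x b = if b = x k then 1 else 0 := by
    intro b
    have hcongr : MCES.TT p k K x b = MCES.TT p k ({k} : Finset ℕ) x b := by
      apply MCES.TT_congr
      intro i hi
      simp only [Finset.mem_singleton]
      constructor
      · intro h; have := hKge i h; omega
      · intro h; rw [h]; exact K.min'_mem hK
    rw [hcongr]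
    rw [MCES.TT_top_constraint p k ({k} : Finset ℕ) (Finset.mem_singleton_self k) x b]
    rw [Finset.erase_singleton]
    by_cases hb : b = x k
    · rw [if_pos hb, if_pos hb, MCES.TT_empty g hg hcard bar hinv p hp k x b]
    · rw [if_neg hb, if_neg hb]
  set lam := AJ * MCES.Pm p r0 (x j) (x k) with hlam
  have hprop : ∀ r b, MCES.TT p (k + r) (J ∪ K) x b = lam * MCES.TT p (k + r) K x b := by
    intro r
    induction r with
    | zero =>
        intro b
        show MCES.TT p k (J ∪ K) x b = lam * MCES.TT p k K x b
        rw [hTTkJK b, hTTkK b]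
        split <;> ring
    | succ r ih =>
        intro b
        have hstep : k + (r + 1) = (k + r) + 1 := rfl
        rw [hstep, MCES.TT_succ, MCES.TT_succ]
        by_cases hc : (k + r + 1) ∈ K ∧ b ≠ x (k + r + 1)
        · rw [if_pos hc, if_pos ⟨Finset.mem_union_right _ hc.1, hc.2⟩, mul_zero]
        · have hc' : ¬((k + r + 1) ∈ J ∪ K ∧ b ≠ x (k + r + 1)) := by
            rintro ⟨hmem, hne⟩
            rcases Finset.mem_union.mp hmem with h | h
            · have := hJle _ h; omega
            · exact hc ⟨h, hne⟩
          rw [if_neg hc, if_neg hc']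
          simp_rw [ih, mul_assoc]
          rw [← Finset.mul_sum]
  have hRRJK : MCES.RR p M (J ∪ K) x = lam * MCES.RR p M K x := by
    rw [MCES.RR_eq_sum_TT, MCES.RR_eq_sum_TT]
    have hMk : k + (M - k) = M := by omega
    rw [← hMk]
    simp_rw [hprop (M - k)]
    rw [← Finset.mul_sum]
  have hRRJ : MCES.RR p M J x = AJ := by
    rw [MCES.RR_eq_sum_TT]
    have hMj : j + (M - j) = M := by omega
    rw [← hMj]
    simp_rw [hTTjr (M - j)]
    rw [← Finset.mul_sum, MCES.Pm_rowsum g hg hcard bar p hp (M - j) (x j), mul_one]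
  -- real-number assembly
  have hAJnn : 0 ≤ AJ := MCES.TT_nonneg p hpn j (J.erase j) x (x j)
  have hRRKnn : 0 ≤ MCES.RR p M K x := MCES.RR_nonneg p hpn M K x
  have hRRJKnn : 0 ≤ MCES.RR p M (J ∪ K) x := MCES.RR_nonneg p hpn M (J ∪ K) x
  set A := (1 / (g:ℝ)) * AJ with hA
  set B := (1 / (g:ℝ)) * MCES.RR p M K x with hB
  set E := (g:ℝ) * MCES.Pm p r0 (x j) (x k) with hE
  have hAnn : 0 ≤ A := by positivity
  have hBnn : 0 ≤ B := by positivity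
  have htJ : (ν {y : ℕ → G | ∀ i ∈ J, y i = x i}).toReal = A := by
    rw [hνJ, ENNReal.toReal_ofReal (by rw [hRRJ] at *; positivity), hRRJ]
  have htK : (ν {y : ℕ → G | ∀ i ∈ K, y i = x i}).toReal = B := by
    rw [hνK, ENNReal.toReal_ofReal (by positivity)]
  have htJK : (ν {y : ℕ → G | ∀ i ∈ J ∪ K, y i = x i}).toReal = A * B * E := by
    rw [hνJK, ENNReal.toReal_ofReal (by positivity), hRRJK, hlam, hA, hB, hE]
    field_simp
  have hbound := MCES.gPm_bound g hg hcard bar hinv p hp r0 m hmr0 (x j) (x k)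
  rw [← hθ] at hbound
  rw [← hE] at hbound
  rw [abs_le] at hbound
  have hEl : 1 - (g:ℝ) * θ ^ m ≤ E := by linarith [hbound.1]
  have hEu : E ≤ 1 + (g:ℝ) * θ ^ m := by linarith [hbound.2]
  rw [htJ, htK, htJK]
  constructor
  · have := mul_le_mul_of_nonneg_right hEl (mul_nonneg hAnn hBnn)
    linarith [this]
  · have := mul_le_mul_of_nonneg_right hEu (mul_nonneg hAnn hBnn)
    linarith [this]
end

section
/- Let J_i, J_k, J_m be independent random variables each uniform on {0,…,g−2}, with i, k, m distinct indices, and t(a,b) = a(g−2−b)+b(g−2−a). Then Cov(t(J_i,J_k), t(J_i,J_m)) = 0, i.e., E[t(J_i,J_k)·t(J_i,J_m)] = (g−2)⁴/4 = E[t(J_i,J_k)]·E[t(J_i,J_m)]. -/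
open Finset

/-- with `t(a,b) = a(g-2-b) + b(g-2-a)` and `J_i, J_k, J_m`
independent uniform on `{0,…,g-2}`, `t(J_i,J_k)` and `t(J_i,J_m)` are
uncorrelated: `E[t(J_i,J_k)·t(J_i,J_m)] = (g-2)⁴/4 = E[t(J_i,J_k)]·E[t(J_i,J_m)]`. -/
theorem t_kernel_uncorrelated_shared_index (g : ℕ) (hg : 3 ≤ g)
    (t : ℝ → ℝ → ℝ)
    (ht : ∀ a b : ℝ, t a b = a * ((g : ℝ) - 2 - b) + b * ((g : ℝ) - 2 - a)) :
    (∑ i ∈ range (g - 1), ∑ k ∈ range (g - 1), ∑ m ∈ range (g - 1),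
        t (i : ℝ) (k : ℝ) * t (i : ℝ) (m : ℝ)) / ((g : ℝ) - 1) ^ 3 =
      ((g : ℝ) - 2) ^ 4 / 4 ∧
    ((g : ℝ) - 2) ^ 4 / 4 =
      ((∑ i ∈ range (g - 1), ∑ k ∈ range (g - 1), t (i : ℝ) (k : ℝ)) /
          ((g : ℝ) - 1) ^ 2) *
        ((∑ i ∈ range (g - 1), ∑ m ∈ range (g - 1), t (i : ℝ) (m : ℝ)) /
          ((g : ℝ) - 1) ^ 2) := by
  set n : ℕ := g - 1 with hn
  have hn1 : (n : ℝ) = (g : ℝ) - 1 := by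
    have : 1 ≤ g := by omega
    push_cast [hn, Nat.cast_sub this]
    ring
  have hpos : (0 : ℝ) < (g : ℝ) - 1 := by
    have : (3 : ℝ) ≤ (g : ℝ) := by exact_mod_cast hg
    linarith
  -- Gauss sum
  have hB : ∑ b ∈ range n, (b : ℝ) = ((g : ℝ) - 1) * ((g : ℝ) - 2) / 2 := by
    have h2 := Finset.sum_range_id_mul_two n
    have h3 : ((∑ b ∈ range n, b : ℕ) : ℝ) * 2 = (n : ℝ) * ((n : ℝ) - 1) := by
      have hn2 : 1 ≤ n := by omega
      have := congrArg (Nat.cast : ℕ → ℝ) h2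
      push_cast [Nat.cast_sub hn2] at this
      push_cast
      linarith [this]
    have h4 : ∑ b ∈ range n, (b : ℝ) = (n : ℝ) * ((n : ℝ) - 1) / 2 := by
      push_cast at h3
      linarith
    rw [h4, hn1]; ring
  -- inner sum is constant in a
  have hsum : ∀ a : ℝ, ∑ b ∈ range n, t a (b : ℝ)
      = ((g : ℝ) - 1) * ((g : ℝ) - 2) ^ 2 / 2 := by
    intro a
    have hf : ∀ b ∈ range n, t a (b : ℝ)
        = a * ((g : ℝ) - 2) + (((g : ℝ) - 2) - 2 * a) * (b : ℝ) := by
      intro b _; rw [ht]; ring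
    rw [Finset.sum_congr rfl hf, Finset.sum_add_distrib, Finset.sum_const,
      ← Finset.mul_sum, hB, Finset.card_range, nsmul_eq_mul, hn1]
    ring
  set C : ℝ := ((g : ℝ) - 1) * ((g : ℝ) - 2) ^ 2 / 2 with hC
  have htriple : ∑ i ∈ range n, ∑ k ∈ range n, ∑ m ∈ range n,
      t (i : ℝ) (k : ℝ) * t (i : ℝ) (m : ℝ) = ((g : ℝ) - 1) * C ^ 2 := by
    have : ∀ i ∈ range n, (∑ k ∈ range n, ∑ m ∈ range n,
        t (i : ℝ) (k : ℝ) * t (i : ℝ) (m : ℝ)) = C ^ 2 := by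
      intro i _
      rw [← Finset.sum_mul_sum, hsum]; ring
    rw [Finset.sum_congr rfl this, Finset.sum_const, Finset.card_range,
      nsmul_eq_mul, hn1]
  have hdouble : ∑ i ∈ range n, ∑ k ∈ range n, t (i : ℝ) (k : ℝ)
      = ((g : ℝ) - 1) * C := by
    have : ∀ i ∈ range n, (∑ k ∈ range n, t (i : ℝ) (k : ℝ)) = C := by
      intro i _; exact hsum _
    rw [Finset.sum_congr rfl this, Finset.sum_const, Finset.card_range,
      nsmul_eq_mul, hn1]
  constructor
  · rw [htriple, hC]
    field_simp
    ring
  · rw [hdouble, hC]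
    field_simp
    ring
end

section
/- Let J_i, J_k be independent uniform on {0,…,g−2} with i ≠ k, and t(a,b)=a(g−2−b)+b(g−2−a). Then E[t(J_i,J_i)·t(J_i,J_k)] = (g−2)³(g−3)/6 = E[t(J_i,J_i)]·E[t(J_i,J_k)]; that is, t(J_i,J_i) and t(J_i,J_k) are uncorrelated. -/
open Finset

lemma poly_sum_cubic (c0 c1 c2 c3 : ℝ) (n : ℕ) :
    ∑ i ∈ range n, (c0 + c1 * (i : ℝ) + c2 * (i : ℝ) ^ 2 + c3 * (i : ℝ) ^ 3) =
      (n : ℝ) * c0 + c1 * ((n : ℝ) * ((n : ℝ) - 1) / 2)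
        + c2 * ((n : ℝ) * ((n : ℝ) - 1) * (2 * (n : ℝ) - 1) / 6)
        + c3 * ((n : ℝ) * ((n : ℝ) - 1) / 2) ^ 2 := by
  induction n with
  | zero => simp
  | succ n ih =>
    rw [sum_range_succ, ih]
    push_cast
    ring

/-- with `t(a,b) = a(g-2-b) + b(g-2-a)` and `J_i, J_k` independent
uniform on `{0,…,g-2}`, `t(J_i,J_i)` and `t(J_i,J_k)` are uncorrelated:
`E[t(J_i,J_i)·t(J_i,J_k)] = (g-2)³(g-3)/6 = E[t(J_i,J_i)]·E[t(J_i,J_k)]`. -/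
theorem t_kernel_diagonal_uncorrelated (g : ℕ) (hg : 3 ≤ g)
    (t : ℝ → ℝ → ℝ)
    (ht : ∀ a b : ℝ, t a b = a * ((g : ℝ) - 2 - b) + b * ((g : ℝ) - 2 - a)) :
    (∑ i ∈ range (g - 1), ∑ k ∈ range (g - 1),
        t (i : ℝ) (i : ℝ) * t (i : ℝ) (k : ℝ)) / ((g : ℝ) - 1) ^ 2 =
      ((g : ℝ) - 2) ^ 3 * ((g : ℝ) - 3) / 6 ∧
    ((g : ℝ) - 2) ^ 3 * ((g : ℝ) - 3) / 6 =
      ((∑ i ∈ range (g - 1), t (i : ℝ) (i : ℝ)) / ((g : ℝ) - 1)) *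
        ((∑ i ∈ range (g - 1), ∑ k ∈ range (g - 1), t (i : ℝ) (k : ℝ)) /
          ((g : ℝ) - 1) ^ 2) := by
  set n : ℕ := g - 1 with hn
  have hgn : (g : ℝ) = (n : ℝ) + 1 := by
    have h1 : (1 : ℕ) ≤ g := by omega
    rw [hn, Nat.cast_sub h1]; push_cast; ring
  have hN : (2 : ℝ) ≤ (n : ℝ) := by
    have : 2 ≤ n := by omega
    exact_mod_cast this
  have hNne : (n : ℝ) ≠ 0 := by linarith
  set N : ℝ := (n : ℝ)
  set m : ℝ := (g : ℝ) - 2 with hm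
  have hmN : m = N - 1 := by rw [hm, hgn]; ring
  -- inner sums
  have hinner : ∀ i : ℕ, ∑ k ∈ range n, t (i : ℝ) (i : ℝ) * t (i : ℝ) (k : ℝ)
      = N * (2 * m ^ 2 * (i : ℝ) ^ 2 - 2 * m * (i : ℝ) ^ 3)
        + (2 * m ^ 2 * (i : ℝ) - 6 * m * (i : ℝ) ^ 2 + 4 * (i : ℝ) ^ 3)
          * (N * (N - 1) / 2) := by
    intro i
    have : ∑ k ∈ range n, t (i : ℝ) (i : ℝ) * t (i : ℝ) (k : ℝ)
        = ∑ k ∈ range n, ((2 * m ^ 2 * (i : ℝ) ^ 2 - 2 * m * (i : ℝ) ^ 3)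
            + (2 * m ^ 2 * (i : ℝ) - 6 * m * (i : ℝ) ^ 2 + 4 * (i : ℝ) ^ 3) * (k : ℝ)
            + 0 * (k : ℝ) ^ 2 + 0 * (k : ℝ) ^ 3) := by
      refine sum_congr rfl fun k _ => ?_
      rw [ht, ht, hm]; ring
    rw [this, poly_sum_cubic]
    ring
  have hinner2 : ∀ i : ℕ, ∑ k ∈ range n, t (i : ℝ) (k : ℝ)
      = N * (m * (i : ℝ)) + (m - 2 * (i : ℝ)) * (N * (N - 1) / 2) := by
    intro i
    have : ∑ k ∈ range n, t (i : ℝ) (k : ℝ)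
        = ∑ k ∈ range n, (m * (i : ℝ) + (m - 2 * (i : ℝ)) * (k : ℝ)
            + 0 * (k : ℝ) ^ 2 + 0 * (k : ℝ) ^ 3) := by
      refine sum_congr rfl fun k _ => ?_
      rw [ht, hm]; ring
    rw [this, poly_sum_cubic]
    ring
  -- the three total sums
  have hD : ∑ i ∈ range n, ∑ k ∈ range n, t (i : ℝ) (i : ℝ) * t (i : ℝ) (k : ℝ)
      = N * 0 + (2 * m ^ 2 * (N * (N - 1) / 2)) * (N * (N - 1) / 2)
        + (N * 2 * m ^ 2 + (-6 * m) * (N * (N - 1) / 2)) * (N * (N - 1) * (2 * N - 1) / 6)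
        + (N * (-2 * m) + 4 * (N * (N - 1) / 2)) * (N * (N - 1) / 2) ^ 2 := by
    rw [sum_congr rfl fun i _ => hinner i]
    have : ∑ i ∈ range n,
        (N * (2 * m ^ 2 * (i : ℝ) ^ 2 - 2 * m * (i : ℝ) ^ 3)
          + (2 * m ^ 2 * (i : ℝ) - 6 * m * (i : ℝ) ^ 2 + 4 * (i : ℝ) ^ 3)
            * (N * (N - 1) / 2))
        = ∑ i ∈ range n, ((0 : ℝ)
            + (2 * m ^ 2 * (N * (N - 1) / 2)) * (i : ℝ)
            + (N * 2 * m ^ 2 + (-6 * m) * (N * (N - 1) / 2)) * (i : ℝ) ^ 2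
            + (N * (-2 * m) + 4 * (N * (N - 1) / 2)) * (i : ℝ) ^ 3) := by
      refine sum_congr rfl fun i _ => ?_; ring
    rw [this, poly_sum_cubic]
  have hA : ∑ i ∈ range n, t (i : ℝ) (i : ℝ)
      = N * 0 + (2 * m) * (N * (N - 1) / 2) + (-2) * (N * (N - 1) * (2 * N - 1) / 6)
        + 0 * (N * (N - 1) / 2) ^ 2 := by
    have : ∑ i ∈ range n, t (i : ℝ) (i : ℝ)
        = ∑ i ∈ range n, ((0 : ℝ) + (2 * m) * (i : ℝ) + (-2) * (i : ℝ) ^ 2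
            + 0 * (i : ℝ) ^ 3) := by
      refine sum_congr rfl fun i _ => ?_
      rw [ht, hm]; ring
    rw [this, poly_sum_cubic]
  have hB : ∑ i ∈ range n, ∑ k ∈ range n, t (i : ℝ) (k : ℝ)
      = N * (m * (N * (N - 1) / 2)) + (N * m + (-2) * (N * (N - 1) / 2)) * (N * (N - 1) / 2)
        + 0 * (N * (N - 1) * (2 * N - 1) / 6) + 0 * (N * (N - 1) / 2) ^ 2 := by
    rw [sum_congr rfl fun i _ => hinner2 i]
    have : ∑ i ∈ range n,
        (N * (m * (i : ℝ)) + (m - 2 * (i : ℝ)) * (N * (N - 1) / 2))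
        = ∑ i ∈ range n, ((m * (N * (N - 1) / 2))
            + (N * m + (-2) * (N * (N - 1) / 2)) * (i : ℝ)
            + 0 * (i : ℝ) ^ 2 + 0 * (i : ℝ) ^ 3) := by
      refine sum_congr rfl fun i _ => ?_; ring
    rw [this, poly_sum_cubic]
  rw [hD, hA, hB, hgn] at *
  constructor
  · rw [hmN]
    rw [show N + 1 - 1 = N by ring]
    field_simp
    ring
  · rw [hmN]
    rw [show N + 1 - 1 = N by ring]
    field_simp
    ring
end
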